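/- arXiv:1207.5579 — 2 statements merged into one kernel-verified Lean document; each statement's English description precedes it below -/
import Mathlib

section
/- For each r ≥ 0 and d ≥ 1, define Θ^{(d)}_{r_1,...,r_d} = (r!/(r_1!···r_d!)) · (2r_1-1)!!···(2r_d-1)!! / (d(d+2)···(d+2r-2)) for nonnegative integers with r_1+···+r_d = r. Then Σ_{r_1+···+r_d=r} Θ^{(d)}_{r_1,...,r_d} = 1, i.e., these coefficients form a probability distribution on the set of such tuples. -/
/-- `dfact n = (2n-1)!!`, the odd double factorial, with `(-1)!! = 1`. -/
def dfact : ℕ → ℕ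
  | 0 => 1
  | n + 1 => (2 * n + 1) * dfact n

/-- `Θ^{(d)}_{r_1,…,r_d} = (r!/(r_1!⋯r_d!)) · (2r_1-1)!!⋯(2r_d-1)!! / (d(d+2)⋯(d+2r-2))`. -/
noncomputable def Theta (d r : ℕ) (p : Fin d → ℕ) : ℝ :=
  (Nat.multinomial Finset.univ p : ℝ) * (∏ i, (dfact (p i) : ℝ)) /
    ∏ j ∈ Finset.range r, ((d : ℝ) + 2 * j)

/-- Auxiliary: `ff n = (2n-1)!!/n!`. -/
noncomputable def ff (n : ℕ) : ℝ := (dfact n : ℝ) / n.factorial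

lemma ff_succ (m : ℕ) : ((m + 1 : ℕ) : ℝ) * ff (m + 1) = (2 * m + 1) * ff m := by
  have h1 : (m.factorial : ℝ) ≠ 0 := Nat.cast_ne_zero.mpr m.factorial_ne_zero
  have h2 : ((m + 1).factorial : ℝ) ≠ 0 := Nat.cast_ne_zero.mpr (m + 1).factorial_ne_zero
  rw [ff, ff]
  have hd : (dfact (m + 1) : ℝ) = (2 * m + 1) * dfact m := by
    show ((((2 * m + 1) * dfact m : ℕ)) : ℝ) = _
    push_cast; ring
  have hf : ((m + 1).factorial : ℝ) = (m + 1) * m.factorial := by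
    rw [Nat.factorial_succ]; push_cast; ring
  rw [hd, hf]
  field_simp
  push_cast; ring

lemma key (d r : ℕ) :
    (r.factorial : ℝ) * ∑ p ∈ Finset.Nat.antidiagonalTuple d r, ∏ i, ff (p i)
      = ∏ j ∈ Finset.range r, ((d : ℝ) + 2 * j) := by
  induction r with
  | zero => simp [Finset.Nat.antidiagonalTuple_zero_right, ff, dfact]
  | succ r ih =>
    -- Step 1: multiply inside by (r+1) = ∑ i, p i
    have step1 : ((r + 1 : ℕ) : ℝ) * ∑ p ∈ Finset.Nat.antidiagonalTuple d (r + 1), ∏ i, ff (p i)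
        = ∑ p ∈ Finset.Nat.antidiagonalTuple d (r + 1), ∑ i : Fin d,
            (p i : ℝ) * ∏ j, ff (p j) := by
      rw [Finset.mul_sum]
      refine Finset.sum_congr rfl fun p hp => ?_
      have hsum : ∑ i, p i = r + 1 := Finset.Nat.mem_antidiagonalTuple.mp hp
      have : ((r + 1 : ℕ) : ℝ) = ∑ i : Fin d, (p i : ℝ) := by
        rw [← Nat.cast_sum, hsum]
      rw [this, Finset.sum_mul]
    -- Step 2: double sum as sum over product, restricted to nonzero coordinates
    set s : Finset ((Fin d → ℕ) × Fin d) :=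
      (Finset.Nat.antidiagonalTuple d (r + 1) ×ˢ Finset.univ).filter (fun x => x.1 x.2 ≠ 0)
      with hs
    set t : Finset ((Fin d → ℕ) × Fin d) :=
      Finset.Nat.antidiagonalTuple d r ×ˢ Finset.univ with ht
    have step2 : (∑ p ∈ Finset.Nat.antidiagonalTuple d (r + 1), ∑ i : Fin d,
            (p i : ℝ) * ∏ j, ff (p j))
        = ∑ x ∈ s, (x.1 x.2 : ℝ) * ∏ j, ff (x.1 j) := by
      symm
      rw [hs, Finset.sum_filter_of_ne]
      · exact Finset.sum_product _ _ _
      · intro x _ hx h0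
        apply hx
        rw [h0]
        simp
    -- Step 3: the bijection
    have step3 : (∑ x ∈ s, (x.1 x.2 : ℝ) * ∏ j, ff (x.1 j))
        = ∑ x ∈ t, (2 * (x.1 x.2 : ℝ) + 1) * ∏ j, ff (x.1 j) := by
      refine Finset.sum_nbij'
        (fun x => (Function.update x.1 x.2 (x.1 x.2 - 1), x.2))
        (fun x => (Function.update x.1 x.2 (x.1 x.2 + 1), x.2)) ?_ ?_ ?_ ?_ ?_
      · rintro ⟨p, i⟩ hx
        rw [hs, Finset.mem_filter, Finset.mem_product, Finset.Nat.mem_antidiagonalTuple] at hx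
        obtain ⟨⟨hsum, -⟩, hne⟩ := hx
        dsimp only at hne ⊢
        rw [ht, Finset.mem_product, Finset.Nat.mem_antidiagonalTuple]
        refine ⟨?_, Finset.mem_univ _⟩
        show ∑ j, Function.update p i (p i - 1) j = r
        have h1 : ∑ j, Function.update p i (p i - 1) j
            = (p i - 1) + ∑ j ∈ Finset.univ \ {i}, p j :=
          Finset.sum_update_of_mem (Finset.mem_univ i) _ _
        have h2 : p i + ∑ j ∈ Finset.univ \ {i}, p j = r + 1 := by
          rw [← Finset.erase_eq, Finset.add_sum_erase _ _ (Finset.mem_univ i), hsum]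
        omega
      · rintro ⟨q, i⟩ hx
        rw [ht, Finset.mem_product, Finset.Nat.mem_antidiagonalTuple] at hx
        obtain ⟨hsum, -⟩ := hx
        dsimp only
        rw [hs, Finset.mem_filter, Finset.mem_product, Finset.Nat.mem_antidiagonalTuple]
        refine ⟨⟨?_, Finset.mem_univ _⟩, by simp⟩
        show ∑ j, Function.update q i (q i + 1) j = r + 1
        have h1 : ∑ j, Function.update q i (q i + 1) j
            = (q i + 1) + ∑ j ∈ Finset.univ \ {i}, q j :=
          Finset.sum_update_of_mem (Finset.mem_univ i) _ _
        have h2 : q i + ∑ j ∈ Finset.univ \ {i}, q j = r := by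
          rw [← Finset.erase_eq, Finset.add_sum_erase _ _ (Finset.mem_univ i), hsum]
        omega
      · rintro ⟨p, i⟩ hx
        rw [hs, Finset.mem_filter] at hx
        obtain ⟨-, hne⟩ := hx
        dsimp only at hne ⊢
        have : Function.update p i (p i - 1) i = p i - 1 := Function.update_self _ _ _
        rw [Prod.mk.injEq]
        refine ⟨?_, rfl⟩
        rw [this, Function.update_idem]
        have : p i - 1 + 1 = p i := by omega
        rw [this, Function.update_eq_self]
      · rintro ⟨q, i⟩ _
        dsimp only
        rw [Prod.mk.injEq]
        refine ⟨?_, rfl⟩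
        rw [Function.update_self, Function.update_idem]
        have : q i + 1 - 1 = q i := by omega
        rw [this, Function.update_eq_self]
      · rintro ⟨p, i⟩ hx
        rw [hs, Finset.mem_filter] at hx
        obtain ⟨-, hne⟩ := hx
        dsimp only at hne ⊢
        obtain ⟨m, hm⟩ : ∃ m, p i = m + 1 := ⟨p i - 1, by omega⟩
        set q : Fin d → ℕ := Function.update p i (p i - 1) with hq
        have hqi : q i = m := by rw [hq, Function.update_self, hm]; omega
        have hprod : ∏ j, ff (p j) = ff (p i) * ∏ j ∈ Finset.univ.erase i, ff (p j) :=
          (Finset.mul_prod_erase _ _ (Finset.mem_univ i)).symm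
        have hprod2 : ∏ j, ff (q j) = ff (q i) * ∏ j ∈ Finset.univ.erase i, ff (q j) :=
          (Finset.mul_prod_erase _ _ (Finset.mem_univ i)).symm
        have heq : ∏ j ∈ Finset.univ.erase i, ff (q j)
            = ∏ j ∈ Finset.univ.erase i, ff (p j) := by
          refine Finset.prod_congr rfl fun j hj => ?_
          rw [hq, Function.update_of_ne (Finset.ne_of_mem_erase hj)]
        rw [hprod, hprod2, heq, hqi, hm]
        have := ff_succ m
        push_cast at this ⊢
        rw [← mul_assoc, this]
        ring
    -- Step 4: sum over i of (2 q i + 1) equals 2r + d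
    have step4 : (∑ x ∈ t, (2 * (x.1 x.2 : ℝ) + 1) * ∏ j, ff (x.1 j))
        = ((d : ℝ) + 2 * r) * ∑ q ∈ Finset.Nat.antidiagonalTuple d r, ∏ j, ff (q j) := by
      rw [ht, Finset.sum_product, Finset.mul_sum]
      refine Finset.sum_congr rfl fun q hq => ?_
      dsimp only
      have hsum : ∑ i, q i = r := Finset.Nat.mem_antidiagonalTuple.mp hq
      rw [← Finset.sum_mul]
      congr 1
      have : ∑ i : Fin d, (2 * (q i : ℝ) + 1) = 2 * (∑ i, (q i : ℝ)) + d := by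
        rw [Finset.sum_add_distrib, ← Finset.mul_sum]
        simp
      rw [this, ← Nat.cast_sum, hsum]
      ring
    have hfact : ((r + 1).factorial : ℝ) = ((r + 1 : ℕ) : ℝ) * r.factorial := by
      rw [Nat.factorial_succ]; push_cast; ring
    calc ((r + 1).factorial : ℝ) * ∑ p ∈ Finset.Nat.antidiagonalTuple d (r + 1), ∏ i, ff (p i)
        = (r.factorial : ℝ) * (((r + 1 : ℕ) : ℝ)
            * ∑ p ∈ Finset.Nat.antidiagonalTuple d (r + 1), ∏ i, ff (p i)) := by
          rw [hfact]; ring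
      _ = (r.factorial : ℝ) * (((d : ℝ) + 2 * r)
            * ∑ q ∈ Finset.Nat.antidiagonalTuple d r, ∏ j, ff (q j)) := by
          rw [step1, step2, step3, step4]
      _ = ((d : ℝ) + 2 * r)
            * ((r.factorial : ℝ) * ∑ q ∈ Finset.Nat.antidiagonalTuple d r, ∏ j, ff (q j)) := by
          ring
      _ = ∏ j ∈ Finset.range (r + 1), ((d : ℝ) + 2 * j) := by
          rw [ih, Finset.prod_range_succ]; ring

/-- The coefficients `Θ^{(d)}_{r_1,…,r_d}` form a probability distribution on the set of tuples
of nonnegative integers with `r_1 + ⋯ + r_d = r`: they sum to `1`. -/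
theorem Theta_sum_eq_one (d r : ℕ) (hd : 1 ≤ d) :
    ∑ p ∈ Finset.Nat.antidiagonalTuple d r, Theta d r p = 1 := by
  have hD : (0 : ℝ) < ∏ j ∈ Finset.range r, ((d : ℝ) + 2 * j) := by
    apply Finset.prod_pos
    intro j _
    have : (1 : ℝ) ≤ (d : ℝ) := by exact_mod_cast hd
    positivity
  have hnum : ∀ p ∈ Finset.Nat.antidiagonalTuple d r,
      (Nat.multinomial Finset.univ p : ℝ) * (∏ i, (dfact (p i) : ℝ))
        = (r.factorial : ℝ) * ∏ i, ff (p i) := by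
    intro p hp
    have hsum : ∑ i, p i = r := Finset.Nat.mem_antidiagonalTuple.mp hp
    have hspec := Nat.multinomial_spec Finset.univ p
    rw [hsum] at hspec
    have hspecR : (∏ i, ((p i).factorial : ℝ)) * (Nat.multinomial Finset.univ p : ℝ)
        = (r.factorial : ℝ) := by
      exact_mod_cast congrArg (Nat.cast : ℕ → ℝ) hspec
    have hprod : ∏ i, ff (p i)
        = (∏ i, (dfact (p i) : ℝ)) / ∏ i, ((p i).factorial : ℝ) := by
      rw [← Finset.prod_div_distrib]
      rfl
    have hne : (∏ i, ((p i).factorial : ℝ)) ≠ 0 := by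
      apply Finset.prod_ne_zero_iff.mpr
      intro i _
      exact Nat.cast_ne_zero.mpr (p i).factorial_ne_zero
    rw [hprod, ← hspecR]
    field_simp
  calc ∑ p ∈ Finset.Nat.antidiagonalTuple d r, Theta d r p
      = (∑ p ∈ Finset.Nat.antidiagonalTuple d r,
          (Nat.multinomial Finset.univ p : ℝ) * (∏ i, (dfact (p i) : ℝ)))
        / ∏ j ∈ Finset.range r, ((d : ℝ) + 2 * j) := by
        rw [Finset.sum_div]; rfl
    _ = ((r.factorial : ℝ) * ∑ p ∈ Finset.Nat.antidiagonalTuple d r, ∏ i, ff (p i))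
        / ∏ j ∈ Finset.range r, ((d : ℝ) + 2 * j) := by
        rw [Finset.sum_congr rfl hnum, ← Finset.mul_sum]
    _ = 1 := by rw [key]; exact div_self hD.ne'
end

section
/- Let g ∈ SL(d,ℝ) have singular values 0 < λ_1 ≤ ··· ≤ λ_d, let k be an orthogonal matrix with gᵀg = kᵀ diag(λ_1²,...,λ_d²) k, and let ν be a Borel probability measure on 𝕊^{d-1}. If λ_* > λ_d/√2, then ∫ log‖gx‖ dν(x) = log λ_* − Σ_{r=1}^∞ (1/(2r)) Σ_{r_1+···+r_d=r} Θ_{r_1,...,r_d}(k,ν) (1−λ_1²/λ_*²)^{r_1}···(1−λ_d²/λ_*²)^{r_d}, where Θ_{r_1,...,r_d}(k,ν) = (r!/(r_1!···r_d!)) ∫ (kx)_1^{2r_1}···(kx)_d^{2r_d} dν(x), and the series converges absolutely. -/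
open MeasureTheory Matrix

lemma aux_anti (d n : ℕ) :
    Finset.Nat.antidiagonalTuple d n = Finset.piAntidiag Finset.univ n := by
  ext p
  simp [Finset.Nat.mem_antidiagonalTuple, Finset.mem_piAntidiag]

lemma aux_expand {α : Type*} [MeasurableSpace α] (d : ℕ) (ν : Measure α)
    (Y : α → Fin d → ℝ)
    (hint : ∀ p : Fin d → ℕ, Integrable (fun x => ∏ i, (Y x i) ^ (2 * p i)) ν)
    (b : Fin d → ℝ) (n : ℕ) :
    (∫ x, (∑ i, b i * (Y x i) ^ 2) ^ n ∂ν)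
      = ∑ p ∈ Finset.Nat.antidiagonalTuple d n,
          ((Nat.multinomial Finset.univ p : ℝ) *
            ∫ x, ∏ i, (Y x i) ^ (2 * p i) ∂ν) * ∏ i, (b i) ^ (p i) := by
  have hpt : ∀ x, (∑ i, b i * (Y x i) ^ 2) ^ n
      = ∑ p ∈ Finset.Nat.antidiagonalTuple d n,
          (Nat.multinomial Finset.univ p : ℝ) *
            ((∏ i, (b i) ^ (p i)) * ∏ i, (Y x i) ^ (2 * p i)) := by
    intro x
    rw [aux_anti, Finset.sum_pow_eq_sum_piAntidiag]
    refine Finset.sum_congr rfl fun p hp => ?_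
    congr 1
    rw [← Finset.prod_mul_distrib]
    refine Finset.prod_congr rfl fun i _ => ?_
    rw [mul_pow, ← pow_mul]
  calc (∫ x, (∑ i, b i * (Y x i) ^ 2) ^ n ∂ν)
      = ∫ x, ∑ p ∈ Finset.Nat.antidiagonalTuple d n,
          (Nat.multinomial Finset.univ p : ℝ) *
            ((∏ i, (b i) ^ (p i)) * ∏ i, (Y x i) ^ (2 * p i)) ∂ν := by
        exact integral_congr_ae (Filter.EventuallyEq.of_eq (funext hpt))
    _ = ∑ p ∈ Finset.Nat.antidiagonalTuple d n,
          ∫ x, (Nat.multinomial Finset.univ p : ℝ) *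
            ((∏ i, (b i) ^ (p i)) * ∏ i, (Y x i) ^ (2 * p i)) ∂ν := by
        refine integral_finset_sum _ fun p _ => ?_
        exact (((hint p).const_mul _).const_mul _)
    _ = ∑ p ∈ Finset.Nat.antidiagonalTuple d n,
          ((Nat.multinomial Finset.univ p : ℝ) *
            ∫ x, ∏ i, (Y x i) ^ (2 * p i) ∂ν) * ∏ i, (b i) ^ (p i) := by
        refine Finset.sum_congr rfl fun p _ => ?_
        rw [integral_const_mul, integral_const_mul]
        ring

/-- **Theorem B.** Let `g ∈ SL(d,ℝ)` have singular values `0 < λ_1 ≤ ⋯ ≤ λ_d`, with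
`gᵀg = kᵀ diag(λ_1²,…,λ_d²) k` for `k` orthogonal, and let `ν` be a Borel probability measure
on the sphere. If `λ_* > λ_d/√2` then
`∫ log‖gx‖ dν = log λ_* − Σ_{r≥1} (1/(2r)) Σ_{r_1+⋯+r_d=r} Θ_{r_1,…,r_d}(k,ν)
(1−λ_1²/λ_*²)^{r_1} ⋯ (1−λ_d²/λ_*²)^{r_d}`, where
`Θ_{r_1,…,r_d}(k,ν) = (r!/(r_1!⋯r_d!)) ∫ (kx)_1^{2r_1}⋯(kx)_d^{2r_d} dν`,
with absolute convergence of the series. -/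
theorem theoremB (d : ℕ) (hd : 1 ≤ d) (g k : Matrix (Fin d) (Fin d) ℝ) (hg : g.det = 1)
    (lam : Fin d → ℝ) (hpos : ∀ i, 0 < lam i) (hmono : Monotone lam)
    (hk : k ∈ Matrix.orthogonalGroup (Fin d) ℝ)
    (hsvd : g.transpose * g = k.transpose * Matrix.diagonal (fun i => lam i ^ 2) * k)
    (ν : Measure (Metric.sphere (0 : EuclideanSpace ℝ (Fin d)) 1)) [IsProbabilityMeasure ν]
    (lstar : ℝ) (hstar : lam ⟨d - 1, by omega⟩ / Real.sqrt 2 < lstar) :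
    Summable (fun r : ℕ => (1 / (2 * ((r : ℝ) + 1))) *
        ∑ p ∈ Finset.Nat.antidiagonalTuple d (r + 1),
          ((Nat.multinomial Finset.univ p : ℝ) *
            ∫ x : Metric.sphere (0 : EuclideanSpace ℝ (Fin d)) 1,
              ∏ i, (k.mulVec (x : EuclideanSpace ℝ (Fin d))) i ^ (2 * p i) ∂ν) *
            ∏ i, |1 - lam i ^ 2 / lstar ^ 2| ^ p i) ∧
    (∫ x : Metric.sphere (0 : EuclideanSpace ℝ (Fin d)) 1,
        Real.log ‖(EuclideanSpace.equiv (Fin d) ℝ).symm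
          (g.mulVec (x : EuclideanSpace ℝ (Fin d)))‖ ∂ν)
      = Real.log lstar - ∑' r : ℕ, (1 / (2 * ((r : ℝ) + 1))) *
          ∑ p ∈ Finset.Nat.antidiagonalTuple d (r + 1),
            ((Nat.multinomial Finset.univ p : ℝ) *
              ∫ x : Metric.sphere (0 : EuclideanSpace ℝ (Fin d)) 1,
                ∏ i, (k.mulVec (x : EuclideanSpace ℝ (Fin d))) i ^ (2 * p i) ∂ν) *
              ∏ i, (1 - lam i ^ 2 / lstar ^ 2) ^ p i := by
  classical
  have hd0 : 0 < d := hd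
  haveI : Nonempty (Fin d) := ⟨⟨0, hd0⟩⟩
  -- positivity facts
  have hlam_le : ∀ i, lam i ≤ lam ⟨d - 1, by omega⟩ := by
    intro i
    exact hmono (by rw [Fin.le_def]; simp; omega)
  have hlstar : 0 < lstar :=
    lt_trans (div_pos (hpos _) (by positivity)) hstar
  have hsq : ∀ i, lam i ^ 2 < 2 * lstar ^ 2 := by
    intro i
    have h1 : lam ⟨d - 1, by omega⟩ < Real.sqrt 2 * lstar := by
      rw [div_lt_iff₀ (by positivity)] at hstar
      linarith [hstar]
    have h2 : Real.sqrt 2 ^ 2 = 2 := Real.sq_sqrt (by norm_num)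
    nlinarith [hpos i, hlam_le i, Real.sqrt_nonneg 2, hpos ⟨d - 1, by omega⟩]
  set a : Fin d → ℝ := fun i => 1 - lam i ^ 2 / lstar ^ 2 with ha
  have habs : ∀ i, |a i| < 1 := by
    intro i
    rw [abs_lt]
    have h2 : lam i ^ 2 / lstar ^ 2 < 2 := by
      rw [div_lt_iff₀ (by positivity)]; linarith [hsq i]
    have h3 : 0 < lam i ^ 2 / lstar ^ 2 := div_pos (pow_pos (hpos i) 2) (pow_pos hlstar 2)
    constructor <;> (simp only [ha]; nlinarith)
  set M : ℝ := Finset.univ.sup' Finset.univ_nonempty (fun i => |a i|) with hM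
  have hM1 : M < 1 := by
    rw [hM, Finset.sup'_lt_iff]; exact fun i _ => habs i
  have haM : ∀ i, |a i| ≤ M := by
    intro i; rw [hM]; exact Finset.le_sup' (fun j => |a j|) (Finset.mem_univ i)
  have hM0 : 0 ≤ M := le_trans (abs_nonneg (a ⟨0, hd0⟩)) (haM ⟨0, hd0⟩)
  -- coordinates
  set Y : (Metric.sphere (0 : EuclideanSpace ℝ (Fin d)) 1) → Fin d → ℝ := fun x i => k.mulVec (x : EuclideanSpace ℝ (Fin d)) i with hY
  have hkk : k.transpose * k = 1 := by
    have h := (Unitary.mem_iff.mp hk).1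
    rwa [Matrix.star_eq_conjTranspose, Matrix.conjTranspose_eq_transpose_of_trivial] at h
  have hsum1 : ∀ x : (Metric.sphere (0 : EuclideanSpace ℝ (Fin d)) 1), ∑ i, (x : EuclideanSpace ℝ (Fin d)) i ^ 2 = 1 := by
    intro x
    have hx : ‖(x : EuclideanSpace ℝ (Fin d))‖ = 1 := by
      have := x.2; rwa [mem_sphere_zero_iff_norm] at this
    have h := EuclideanSpace.norm_eq (x : EuclideanSpace ℝ (Fin d))
    rw [hx] at h
    have h2 : ∑ i, ‖(x : EuclideanSpace ℝ (Fin d)) i‖ ^ 2 = 1 := by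
      have hnn : 0 ≤ ∑ i, ‖(x : EuclideanSpace ℝ (Fin d)) i‖ ^ 2 := by positivity
      nlinarith [Real.sq_sqrt hnn]
    simpa [Real.norm_eq_abs, sq_abs] using h2
  have hquad : ∀ (A : Matrix (Fin d) (Fin d) ℝ) (v : Fin d → ℝ),
      ∑ i, (A.mulVec v i) ^ 2 = v ⬝ᵥ ((A.transpose * A).mulVec v) := by
    intro A v
    rw [← Matrix.mulVec_mulVec, Matrix.dotProduct_mulVec, Matrix.vecMul_transpose]
    simp [dotProduct, sq]
  have hYsum : ∀ x : (Metric.sphere (0 : EuclideanSpace ℝ (Fin d)) 1), ∑ i, (Y x i) ^ 2 = 1 := by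
    intro x
    have h := hquad k (x : EuclideanSpace ℝ (Fin d))
    rw [hkk, Matrix.one_mulVec] at h
    simp only [hY]
    rw [h]
    have := hsum1 x
    simp only [dotProduct, ← sq]
    exact this
  have hGsum : ∀ x : (Metric.sphere (0 : EuclideanSpace ℝ (Fin d)) 1), ∑ i, (g.mulVec (x : EuclideanSpace ℝ (Fin d)) i) ^ 2 = ∑ i, lam i ^ 2 * (Y x i) ^ 2 := by
    intro x
    rw [hquad g, hsvd, mul_assoc, ← Matrix.mulVec_mulVec, Matrix.dotProduct_mulVec,
      Matrix.vecMul_transpose, ← Matrix.mulVec_mulVec]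
    simp only [dotProduct, Matrix.mulVec_diagonal, hY]
    exact Finset.sum_congr rfl fun i _ => by ring
  -- the function u
  set u : (Metric.sphere (0 : EuclideanSpace ℝ (Fin d)) 1) → ℝ := fun x => ∑ i, a i * (Y x i) ^ 2 with hu
  have huM : ∀ x : (Metric.sphere (0 : EuclideanSpace ℝ (Fin d)) 1), |u x| ≤ M := by
    intro x
    calc |u x| ≤ ∑ i, |a i * (Y x i) ^ 2| := Finset.abs_sum_le_sum_abs _ _
      _ ≤ ∑ i, M * (Y x i) ^ 2 := by
          refine Finset.sum_le_sum fun i _ => ?_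
          rw [abs_mul, abs_of_nonneg (sq_nonneg (Y x i))]
          exact mul_le_mul_of_nonneg_right (haM i) (sq_nonneg _)
      _ = M := by rw [← Finset.mul_sum, hYsum x, mul_one]
  have hu1 : ∀ x : (Metric.sphere (0 : EuclideanSpace ℝ (Fin d)) 1), |u x| < 1 := fun x => lt_of_le_of_lt (huM x) hM1
  have h1upos : ∀ x : (Metric.sphere (0 : EuclideanSpace ℝ (Fin d)) 1), 0 < 1 - u x := by
    intro x; have := hu1 x; rw [abs_lt] at this; linarith [this.2]
  -- log norm identity
  have hnorm : ∀ x : (Metric.sphere (0 : EuclideanSpace ℝ (Fin d)) 1),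
      Real.log ‖(EuclideanSpace.equiv (Fin d) ℝ).symm (g.mulVec (x : EuclideanSpace ℝ (Fin d)))‖
        = Real.log lstar + (1 / 2) * Real.log (1 - u x) := by
    intro x
    have hval : ∑ i, (g.mulVec (x : EuclideanSpace ℝ (Fin d)) i) ^ 2 = lstar ^ 2 * (1 - u x) := by
      rw [hGsum x]
      have hcongr : ∀ i ∈ Finset.univ, lam i ^ 2 * (Y x i) ^ 2
          = lstar ^ 2 * (Y x i) ^ 2 - lstar ^ 2 * (a i * (Y x i) ^ 2) := by
        intro i _
        simp only [ha]
        field_simp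
        ring
      rw [Finset.sum_congr rfl hcongr, Finset.sum_sub_distrib, ← Finset.mul_sum,
        ← Finset.mul_sum, hYsum x]
      simp only [hu]
      ring
    have hnn : ‖(EuclideanSpace.equiv (Fin d) ℝ).symm (g.mulVec (x : EuclideanSpace ℝ (Fin d)))‖
        = Real.sqrt (lstar ^ 2 * (1 - u x)) := by
      rw [EuclideanSpace.norm_eq]
      rw [← hval]
      congr 1
      refine Finset.sum_congr rfl fun i _ => ?_
      simp [Real.norm_eq_abs, sq_abs]
    rw [hnn, Real.log_sqrt (mul_nonneg (sq_nonneg lstar) (le_of_lt (h1upos x))),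
      Real.log_mul (pow_ne_zero 2 (ne_of_gt hlstar)) (ne_of_gt (h1upos x)), Real.log_pow]
    push_cast
    ring
  -- the series terms
  set F : ℕ → (Metric.sphere (0 : EuclideanSpace ℝ (Fin d)) 1) → ℝ := fun r x => (1 / (2 * ((r : ℝ) + 1))) * u x ^ (r + 1) with hF
  have hHasSum : ∀ x : (Metric.sphere (0 : EuclideanSpace ℝ (Fin d)) 1), HasSum (fun r => F r x)
      (Real.log lstar -
        Real.log ‖(EuclideanSpace.equiv (Fin d) ℝ).symm (g.mulVec (x : EuclideanSpace ℝ (Fin d)))‖) := by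
    intro x
    have h := (Real.hasSum_pow_div_log_of_abs_lt_one (hu1 x)).mul_left (1 / 2)
    have heq : (fun r : ℕ => 1 / 2 * (u x ^ (r + 1) / ((r : ℝ) + 1))) = fun r => F r x := by
      funext r
      simp only [hF]
      have : ((r : ℝ) + 1) ≠ 0 := by positivity
      field_simp
    rw [heq] at h
    rw [show Real.log lstar -
        Real.log ‖(EuclideanSpace.equiv (Fin d) ℝ).symm (g.mulVec (x : EuclideanSpace ℝ (Fin d)))‖
        = 1 / 2 * -Real.log (1 - u x) by rw [hnorm x]; ring]
    exact h
  -- continuity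
  have hYc : ∀ i, Continuous fun x : (Metric.sphere (0 : EuclideanSpace ℝ (Fin d)) 1) => Y x i := by
    intro i
    have heq : (fun x : (Metric.sphere (0 : EuclideanSpace ℝ (Fin d)) 1) => Y x i)
        = fun x : (Metric.sphere (0 : EuclideanSpace ℝ (Fin d)) 1) => ∑ j, k i j * EuclideanSpace.proj (𝕜 := ℝ) j (x : EuclideanSpace ℝ (Fin d)) := by
      funext x
      simp [hY, Matrix.mulVec, dotProduct]
    rw [heq]
    exact continuous_finset_sum _ fun j _ =>
      continuous_const.mul ((EuclideanSpace.proj j).continuous.comp continuous_subtype_val)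
  have huc : Continuous u := by
    apply continuous_finset_sum
    exact fun i _ => continuous_const.mul ((hYc i).pow 2)
  have hint : ∀ f : (Metric.sphere (0 : EuclideanSpace ℝ (Fin d)) 1) → ℝ, Continuous f → Integrable f ν := fun f hf =>
    hf.integrable_of_hasCompactSupport (HasCompactSupport.of_compactSpace f)
  have hintP : ∀ p : Fin d → ℕ, Integrable (fun x : (Metric.sphere (0 : EuclideanSpace ℝ (Fin d)) 1) => ∏ i, (Y x i) ^ (2 * p i)) ν :=
    fun p => hint _ (continuous_finset_prod _ fun i _ => (hYc i).pow _)
  have hFint : ∀ r : ℕ, Integrable (F r) ν := fun r =>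
    hint _ (continuous_const.mul (huc.pow (r + 1)))
  -- norm bounds
  have hFbound : ∀ (r : ℕ) (x : (Metric.sphere (0 : EuclideanSpace ℝ (Fin d)) 1)), ‖F r x‖ ≤ M ^ (r + 1) := by
    intro r x
    rw [Real.norm_eq_abs, hF]
    simp only []
    rw [abs_mul, abs_pow]
    have h1 : |1 / (2 * ((r : ℝ) + 1))| ≤ 1 := by
      rw [abs_of_nonneg (by positivity), div_le_one (by positivity)]
      have : (0 : ℝ) ≤ r := Nat.cast_nonneg r
      linarith
    calc |1 / (2 * ((r : ℝ) + 1))| * |u x| ^ (r + 1)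
        ≤ 1 * M ^ (r + 1) := by
          exact mul_le_mul h1 (pow_le_pow_left₀ (abs_nonneg _) (huM x) _)
            (by positivity) zero_le_one
      _ = M ^ (r + 1) := one_mul _
  have hnormsum : Summable fun r : ℕ => ∫ x, ‖F r x‖ ∂ν := by
    refine Summable.of_nonneg_of_le (fun r => integral_nonneg fun x => norm_nonneg _)
      (fun r => ?_) (((summable_geometric_of_lt_one hM0 hM1).mul_left M))
    calc (∫ x, ‖F r x‖ ∂ν) ≤ ∫ _x, M ^ (r + 1) ∂ν :=
          integral_mono ((hFint r).norm) (integrable_const _) (hFbound r)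
      _ = M ^ (r + 1) := by simp [measure_univ]
      _ = M * M ^ r := by ring
  -- the main HasSum of integrals
  have hmain : HasSum (fun r => ∫ x, F r x ∂ν) (∫ x, ∑' r, F r x ∂ν) :=
    hasSum_integral_of_summable_integral_norm hFint hnormsum
  -- integrability of the log
  have hlogc : Continuous fun x : (Metric.sphere (0 : EuclideanSpace ℝ (Fin d)) 1) => Real.log (1 - u x) := by
    apply Real.continuousOn_log.comp_continuous (continuous_const.sub huc)
    intro x
    simp only [Set.mem_compl_iff, Set.mem_singleton_iff]
    exact ne_of_gt (h1upos x)
  have hlogint : Integrable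
      (fun x : (Metric.sphere (0 : EuclideanSpace ℝ (Fin d)) 1) => Real.log ‖(EuclideanSpace.equiv (Fin d) ℝ).symm (g.mulVec (x : EuclideanSpace ℝ (Fin d)))‖) ν := by
    have heq : (fun x : (Metric.sphere (0 : EuclideanSpace ℝ (Fin d)) 1) => Real.log ‖(EuclideanSpace.equiv (Fin d) ℝ).symm (g.mulVec (x : EuclideanSpace ℝ (Fin d)))‖)
        = fun x : (Metric.sphere (0 : EuclideanSpace ℝ (Fin d)) 1) => Real.log lstar + (1 / 2) * Real.log (1 - u x) := funext hnorm
    rw [heq]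
    exact hint _ (continuous_const.add (continuous_const.mul hlogc))
  have hval2 : (∫ x, ∑' r, F r x ∂ν)
      = Real.log lstar - ∫ x : (Metric.sphere (0 : EuclideanSpace ℝ (Fin d)) 1),
          Real.log ‖(EuclideanSpace.equiv (Fin d) ℝ).symm (g.mulVec (x : EuclideanSpace ℝ (Fin d)))‖ ∂ν := by
    have heq : (fun x : (Metric.sphere (0 : EuclideanSpace ℝ (Fin d)) 1) => ∑' r, F r x)
        = fun x : (Metric.sphere (0 : EuclideanSpace ℝ (Fin d)) 1) => Real.log lstar -
            Real.log ‖(EuclideanSpace.equiv (Fin d) ℝ).symm (g.mulVec (x : EuclideanSpace ℝ (Fin d)))‖ :=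
      funext fun x => (hHasSum x).tsum_eq
    rw [heq, integral_sub (integrable_const _) hlogint, integral_const]
    simp [measure_univ]
  -- identify the terms
  have hterm : ∀ r : ℕ, (∫ x, F r x ∂ν)
      = (1 / (2 * ((r : ℝ) + 1))) *
          ∑ p ∈ Finset.Nat.antidiagonalTuple d (r + 1),
            ((Nat.multinomial Finset.univ p : ℝ) *
              ∫ x : (Metric.sphere (0 : EuclideanSpace ℝ (Fin d)) 1), ∏ i, (k.mulVec (x : EuclideanSpace ℝ (Fin d))) i ^ (2 * p i) ∂ν) *
              ∏ i, (1 - lam i ^ 2 / lstar ^ 2) ^ p i := by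
    intro r
    simp only [hF]
    rw [integral_const_mul]
    congr 1
    exact aux_expand d ν Y hintP a (r + 1)
  -- the absolute-value series
  have habsterm : ∀ r : ℕ, (1 / (2 * ((r : ℝ) + 1))) *
          ∑ p ∈ Finset.Nat.antidiagonalTuple d (r + 1),
            ((Nat.multinomial Finset.univ p : ℝ) *
              ∫ x : (Metric.sphere (0 : EuclideanSpace ℝ (Fin d)) 1), ∏ i, (k.mulVec (x : EuclideanSpace ℝ (Fin d))) i ^ (2 * p i) ∂ν) *
              ∏ i, |1 - lam i ^ 2 / lstar ^ 2| ^ p i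
      = (1 / (2 * ((r : ℝ) + 1))) * ∫ x, (∑ i, |a i| * (Y x i) ^ 2) ^ (r + 1) ∂ν := by
    intro r
    congr 1
    exact (aux_expand d ν Y hintP (fun i => |a i|) (r + 1)).symm
  constructor
  · -- summability
    rw [show (fun r : ℕ => (1 / (2 * ((r : ℝ) + 1))) *
          ∑ p ∈ Finset.Nat.antidiagonalTuple d (r + 1),
            ((Nat.multinomial Finset.univ p : ℝ) *
              ∫ x : (Metric.sphere (0 : EuclideanSpace ℝ (Fin d)) 1), ∏ i, (k.mulVec (x : EuclideanSpace ℝ (Fin d))) i ^ (2 * p i) ∂ν) *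
              ∏ i, |1 - lam i ^ 2 / lstar ^ 2| ^ p i)
        = fun r : ℕ => (1 / (2 * ((r : ℝ) + 1))) *
            ∫ x, (∑ i, |a i| * (Y x i) ^ 2) ^ (r + 1) ∂ν from funext habsterm]
    have habs_pt : ∀ (x : (Metric.sphere (0 : EuclideanSpace ℝ (Fin d)) 1)), 0 ≤ ∑ i, |a i| * (Y x i) ^ 2 := by
      intro x
      exact Finset.sum_nonneg fun i _ => mul_nonneg (abs_nonneg _) (sq_nonneg _)
    have habs_le : ∀ (x : (Metric.sphere (0 : EuclideanSpace ℝ (Fin d)) 1)), ∑ i, |a i| * (Y x i) ^ 2 ≤ M := by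
      intro x
      calc ∑ i, |a i| * (Y x i) ^ 2 ≤ ∑ i, M * (Y x i) ^ 2 :=
            Finset.sum_le_sum fun i _ => mul_le_mul_of_nonneg_right (haM i) (sq_nonneg _)
        _ = M := by rw [← Finset.mul_sum, hYsum x, mul_one]
    have hintabs : ∀ r : ℕ, Integrable (fun x : (Metric.sphere (0 : EuclideanSpace ℝ (Fin d)) 1) => (∑ i, |a i| * (Y x i) ^ 2) ^ (r + 1)) ν :=
      fun r => hint _ ((continuous_finset_sum _ fun i _ =>
        continuous_const.mul ((hYc i).pow 2)).pow (r + 1))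
    refine Summable.of_nonneg_of_le (fun r => ?_) (fun r => ?_)
      ((summable_geometric_of_lt_one hM0 hM1).mul_left M)
    · refine mul_nonneg (by positivity) (integral_nonneg fun x => ?_)
      exact pow_nonneg (habs_pt x) _
    · have hb : (∫ x, (∑ i, |a i| * (Y x i) ^ 2) ^ (r + 1) ∂ν) ≤ M ^ (r + 1) := by
        calc (∫ x, (∑ i, |a i| * (Y x i) ^ 2) ^ (r + 1) ∂ν)
            ≤ ∫ _x, M ^ (r + 1) ∂ν := by
              refine integral_mono (hintabs r) (integrable_const _) fun x => ?_
              exact pow_le_pow_left₀ (habs_pt x) (habs_le x) _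
          _ = M ^ (r + 1) := by simp [measure_univ]
      have h1 : 1 / (2 * ((r : ℝ) + 1)) ≤ 1 := by
        rw [div_le_one (by positivity)]
        have : (0 : ℝ) ≤ r := Nat.cast_nonneg r
        linarith
      have h0 : 0 ≤ ∫ x, (∑ i, |a i| * (Y x i) ^ 2) ^ (r + 1) ∂ν :=
        integral_nonneg fun x => pow_nonneg (habs_pt x) _
      calc (1 / (2 * ((r : ℝ) + 1))) * ∫ x, (∑ i, |a i| * (Y x i) ^ 2) ^ (r + 1) ∂ν
          ≤ 1 * M ^ (r + 1) := mul_le_mul h1 hb h0 zero_le_one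
        _ = M * M ^ r := by ring
  · -- the value of the integral
    have htsum := hmain.tsum_eq
    rw [hval2] at htsum
    rw [show (fun r : ℕ => (1 / (2 * ((r : ℝ) + 1))) *
          ∑ p ∈ Finset.Nat.antidiagonalTuple d (r + 1),
            ((Nat.multinomial Finset.univ p : ℝ) *
              ∫ x : (Metric.sphere (0 : EuclideanSpace ℝ (Fin d)) 1), ∏ i, (k.mulVec (x : EuclideanSpace ℝ (Fin d))) i ^ (2 * p i) ∂ν) *
              ∏ i, (1 - lam i ^ 2 / lstar ^ 2) ^ p i)
        = fun r : ℕ => ∫ x, F r x ∂ν from funext fun r => (hterm r).symm]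
    rw [htsum]
    ring
end
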